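/- For all β₁, β₂ ∈ ℕ, every finite linearly ordered set P, every strictly increasing function c : ℕ → ℕ, and every m ∈ ℕ, there exists L ∈ ℕ such that every (c, m)-controlled bad nested sequence over ℕ^{β₁} × P × ℕ^{β₂} starting at height h₀ = 0 has length at most L. In particular, the maximal length of (c, m)-controlled bad partially nested sequences over ℕ^{β₁} × P × ℕ^{β₂} starting at height 0 is a well-defined natural number. -/

import Mathlib

/-!
# Statement 7: controlled bad nested sequences have bounded length

Over `Y = ℕ^{β₁} × P × ℕ^{β₂}` (ordered lexicographically, `P` a finite linear order),
every `(c, m)`-controlled bad nested sequence starting at height `0` has length at most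
some `L` depending only on `β₁, β₂, P, c, m`.  A sequence of length `n` is modeled as the
first `n` values of a function `f : ℕ → Y × ℕ`.
-/

namespace PNS

/-- Strict lexicographic order on `Fin n → ℕ`. -/
def VecLt {n : ℕ} (u v : Fin n → ℕ) : Prop :=
  ∃ i : Fin n, (∀ j : Fin n, j < i → u j = v j) ∧ u i < v i

/-- The ranking domain `ℕ^{β₁} × P × ℕ^{β₂}`. -/
abbrev Y (β₁ β₂ : ℕ) (P : Type) : Type := (Fin β₁ → ℕ) × P × (Fin β₂ → ℕ)

variable {β₁ β₂ : ℕ} {P : Type}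

/-- Strict lexicographic order on `Y`. -/
def YLt [LT P] (y y' : Y β₁ β₂ P) : Prop :=
  VecLt y.1 y'.1 ∨
    y.1 = y'.1 ∧ (y.2.1 < y'.2.1 ∨ y.2.1 = y'.2.1 ∧ VecLt y.2.2 y'.2.2)

/-- Lexicographic order on `Y`. -/
def YLe [LT P] (y y' : Y β₁ β₂ P) : Prop := y = y' ∨ YLt y y'

/-- Consecutive heights of a nested sequence change by at most one. -/
def HStep (h h' : ℕ) : Prop := h' = h + 1 ∨ h' = h ∨ h = h' + 1

/-- The first `n` elements of `f` form a *good* nested sequence: there are `k < m < n`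
with `y_k ≤_lex y_m` and `h_i ≥ h_k` for all `k < i ≤ m`. -/
def GoodUpTo [LT P] (f : ℕ → Y β₁ β₂ P × ℕ) (n : ℕ) : Prop :=
  ∃ k m : ℕ, k < m ∧ m < n ∧ YLe (f k).1 (f m).1 ∧
    ∀ i : ℕ, k < i → i ≤ m → (f k).2 ≤ (f i).2

/-- `‖y‖`: the maximum of the `ℕ`-entries of `y`. -/
def ynorm (y : Y β₁ β₂ P) : ℕ := Finset.univ.sup y.1 ⊔ Finset.univ.sup y.2.2

end PNS

namespace PNSAux

open PNS Filter

variable {β₁ β₂ : ℕ} {P : Type}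

/-- The target well-founded lexicographic structure. -/
abbrev E (β₁ β₂ : ℕ) (P : Type) : Type :=
  Lex ((Lex (Fin β₁ → ℕ)) × Lex (P × Lex (Fin β₂ → ℕ)))

/-- Embedding of `Y` into `E`. -/
def toE (y : Y β₁ β₂ P) : E β₁ β₂ P :=
  toLex (toLex y.1, toLex (y.2.1, toLex y.2.2))

lemma vecLt_iff_toLex {n : ℕ} {u v : Fin n → ℕ} : VecLt u v ↔ toLex u < toLex v :=
  Iff.rfl

lemma ylt_iff [LinearOrder P] {y y' : Y β₁ β₂ P} :
    YLt y y' ↔ toE y < toE y' := by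
  rw [YLt, toE, toE, Prod.Lex.lt_iff, Prod.Lex.lt_iff]
  constructor
  · rintro (h | ⟨h1, (h2 | ⟨h2, h3⟩)⟩)
    · exact Or.inl (vecLt_iff_toLex.1 h)
    · exact Or.inr ⟨by rw [h1]; rfl, Or.inl h2⟩
    · exact Or.inr ⟨by rw [h1]; rfl, Or.inr ⟨h2, vecLt_iff_toLex.1 h3⟩⟩
  · rintro (h | ⟨h1, (h2 | ⟨h2, h3⟩)⟩)
    · exact Or.inl (vecLt_iff_toLex.2 h)
    · exact Or.inr ⟨toLex_inj.1 h1, Or.inl h2⟩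
    · exact Or.inr ⟨toLex_inj.1 h1, Or.inr ⟨h2, vecLt_iff_toLex.2 h3⟩⟩

lemma vec_trichot {n : ℕ} (u v : Fin n → ℕ) : VecLt u v ∨ u = v ∨ VecLt v u :=
  by
  have h := (Pi.isTrichotomous_lex (· < ·) (fun {_} => (· < ·))
    (IsWellFounded.wf (r := ((· < ·) : Fin n → Fin n → Prop)))).trichotomous u v
  by_cases h1 : VecLt u v
  · exact Or.inl h1
  by_cases h2 : VecLt v u
  · exact Or.inr (Or.inr h2)
  exact Or.inr (Or.inl (h h1 h2))

/-- Totality of the lexicographic order on `Y`. -/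
lemma yle_or_ylt [LinearOrder P] (y y' : Y β₁ β₂ P) : YLe y y' ∨ YLt y' y := by
  obtain ⟨u, q, v⟩ := y
  obtain ⟨u', q', v'⟩ := y'
  rcases vec_trichot u u' with h | rfl | h
  · exact Or.inl (Or.inr (Or.inl h))
  · rcases lt_trichotomy q q' with h | rfl | h
    · exact Or.inl (Or.inr (Or.inr ⟨rfl, Or.inl h⟩))
    · rcases vec_trichot v v' with h | rfl | h
      · exact Or.inl (Or.inr (Or.inr ⟨rfl, Or.inr ⟨rfl, h⟩⟩))
      · exact Or.inl (Or.inl rfl)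
      · exact Or.inr (Or.inr ⟨rfl, Or.inr ⟨rfl, h⟩⟩)
    · exact Or.inr (Or.inr ⟨rfl, Or.inl h⟩)
  · exact Or.inr (Or.inl h)

/-- No infinite strictly descending sequence in `Y`. -/
lemma no_descending [Fintype P] [LinearOrder P] (g : ℕ → Y β₁ β₂ P)
    (hg : ∀ n : ℕ, YLt (g (n + 1)) (g n)) : False := by
  have hwf : WellFounded ((· < ·) : E β₁ β₂ P → E β₁ β₂ P → Prop) := wellFounded_lt
  exact (RelEmbedding.natGT (fun n => toE (g n))
    (fun n => ylt_iff.1 (hg n))).not_wellFounded hwf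

/-- Every infinite sequence of pairs `(y, h)` admits a good pair. -/
lemma infinite_good [Fintype P] [LinearOrder P] (g : ℕ → Y β₁ β₂ P × ℕ) :
    ∃ k m : ℕ, k < m ∧ YLe (g k).1 (g m).1 ∧
      ∀ i : ℕ, k < i → i ≤ m → (g k).2 ≤ (g i).2 := by
  by_contra hbad
  -- from any point we can find a later index which is a running minimum of heights
  have next : ∀ k : ℕ, ∃ m : ℕ, k < m ∧ ∀ i, m ≤ i → (g m).2 ≤ (g i).2 := by
    intro k
    set T : Set ℕ := {v | ∃ i, k < i ∧ (g i).2 = v} with hT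
    have hne : T.Nonempty := ⟨(g (k + 1)).2, k + 1, Nat.lt_succ_self k, rfl⟩
    obtain ⟨i, hik, hi⟩ : ∃ i, k < i ∧ (g i).2 = sInf T := Nat.sInf_mem hne
    refine ⟨i, hik, fun j hj => ?_⟩
    rw [hi]
    exact Nat.sInf_le ⟨j, lt_of_lt_of_le hik hj, rfl⟩
  choose nxt hlt hmin using next
  set φ : ℕ → ℕ := fun n => nxt^[n + 1] 0 with hφ
  have hφsucc : ∀ n, φ (n + 1) = nxt (φ n) := by
    intro n
    simp [hφ, Function.iterate_succ_apply']
  have hφmin : ∀ n i, φ n ≤ i → (g (φ n)).2 ≤ (g i).2 := by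
    intro n
    have : φ n = nxt (nxt^[n] 0) := by simp [hφ, Function.iterate_succ_apply']
    rw [this]
    exact hmin _
  have hφlt : ∀ n, φ n < φ (n + 1) := fun n => (hφsucc n) ▸ hlt (φ n)
  apply no_descending (fun n => (g (φ n)).1)
  intro n
  rcases yle_or_ylt (g (φ n)).1 (g (φ (n + 1))).1 with h | h
  · exact absurd ⟨φ n, φ (n + 1), hφlt n, h, fun i hi _ => hφmin n i hi.le⟩ hbad
  · exact h

/-- The set of controlled pairs at stage `k` is finite. -/
lemma ctrl_finite [Fintype P] (B k : ℕ) :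
    ({p : Y β₁ β₂ P × ℕ | ynorm p.1 ≤ B ∧ p.2 ≤ k}).Finite := by
  classical
  cases isEmpty_or_nonempty P
  · exact Set.toFinite _
  · have h1 : ({u : Fin β₁ → ℕ | ∀ i, u i ≤ B}).Finite := by
      have := Set.Finite.pi (fun i : Fin β₁ => Set.finite_Iic B)
      refine this.subset fun u hu => ?_
      intro i _
      exact hu i
    have h2 : ({v : Fin β₂ → ℕ | ∀ i, v i ≤ B}).Finite := by
      have := Set.Finite.pi (fun i : Fin β₂ => Set.finite_Iic B)
      refine this.subset fun v hv => ?_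
      intro i _
      exact hv i
    have hY : ({y : Y β₁ β₂ P | ynorm y ≤ B}).Finite := by
      have := (h1.prod ((Set.finite_univ (α := P)).prod h2))
      refine this.subset ?_
      rintro ⟨u, q, v⟩ hy
      refine ⟨fun i => ?_, trivial, fun i => ?_⟩
      · exact le_trans (le_trans (Finset.le_sup (Finset.mem_univ i)) le_sup_left) hy
      · exact le_trans (le_trans (Finset.le_sup (Finset.mem_univ i)) le_sup_right) hy
    have := hY.prod (Set.finite_Iic k)
    exact this.subset fun p hp => ⟨hp.1, hp.2⟩

end PNSAux

/-- **Length bound for controlled bad nested sequences.**  For all `β₁, β₂`, every finite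
linearly ordered `P`, every strictly increasing control `c` and every `m`, there is an
`L` bounding the length of every `(c, m)`-controlled bad nested sequence over
`ℕ^{β₁} × P × ℕ^{β₂}` that starts at height `0`.  In particular the maximal length of
`(c, m)`-controlled bad partially nested sequences starting at height `0` is a
well-defined natural number. -/
theorem controlled_bad_nested_sequences_bounded
    (β₁ β₂ : ℕ) (P : Type) [Fintype P] [LinearOrder P]
    (c : ℕ → ℕ) (hc : StrictMono c) (m : ℕ) :
    ∃ L : ℕ, ∀ (n : ℕ) (f : ℕ → PNS.Y β₁ β₂ P × ℕ),
      (0 < n → (f 0).2 = 0) →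
      (∀ k : ℕ, k + 1 < n → PNS.HStep (f k).2 (f (k + 1)).2) →
      (∀ k < n, PNS.ynorm (f k).1 ≤ c^[k] m) →
      ¬ PNS.GoodUpTo f n →
      n ≤ L := by
  classical
  by_contra hcon
  push_neg at hcon
  choose n f h0 hstep hctrl hbad hn using hcon
  -- heights grow by at most one, so they are bounded by the index
  have hbound : ∀ L k, k < n L → (f L k).2 ≤ k := by
    intro L k hk
    induction k with
    | zero => exact (h0 L (by omega)).le
    | succ k ih =>
      have hs := hstep L k hk
      have hk' := ih (by omega)
      rcases hs with h | h | h <;> omega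
  set U : Ultrafilter ℕ := Ultrafilter.of Filter.atTop with hUdef
  have hgt : ∀ N : ℕ, {L | N < L} ∈ U := by
    intro N
    exact Ultrafilter.of_le Filter.atTop (Filter.eventually_gt_atTop N)
  -- pointwise ultrafilter limit of the sequences
  have hex : ∀ k : ℕ, ∃ v : PNS.Y β₁ β₂ P × ℕ, {L | f L k = v} ∈ U := by
    intro k
    have hmem : {L | f L k ∈
        {p : PNS.Y β₁ β₂ P × ℕ | PNS.ynorm p.1 ≤ c^[k] m ∧ p.2 ≤ k}} ∈ U := by
      refine Filter.mem_of_superset (hgt k) ?_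
      intro L hL
      have hkn : k < n L := lt_trans hL (hn L)
      exact ⟨hctrl L k hkn, hbound L k hkn⟩
    have hmap : {p : PNS.Y β₁ β₂ P × ℕ | PNS.ynorm p.1 ≤ c^[k] m ∧ p.2 ≤ k} ∈
        U.map (fun L => f L k) := hmem
    obtain ⟨v, _, hpure⟩ :=
      Ultrafilter.eq_pure_of_finite_mem (PNSAux.ctrl_finite (c^[k] m) k) hmap
    refine ⟨v, ?_⟩
    have : {v} ∈ U.map (fun L => f L k) := by
      rw [hpure]; exact rfl
    simpa [Set.preimage, Set.mem_singleton_iff] using this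
  choose g hg using hex
  have hagree : ∀ N : ℕ, {L | ∀ k ≤ N, f L k = g k} ∈ U := by
    intro N
    induction N with
    | zero =>
      refine Filter.mem_of_superset (hg 0) ?_
      intro L hL k hk
      interval_cases k
      exact hL
    | succ N ih =>
      refine Filter.mem_of_superset (Filter.inter_mem ih (hg (N + 1))) ?_
      rintro L ⟨hL1, hL2⟩ k hk
      rcases Nat.lt_or_ge k (N + 1) with h | h
      · exact hL1 k (by omega)
      · have : k = N + 1 := by omega
        subst this
        exact hL2
  have hpick : ∀ N : ℕ, ∃ L, N < L ∧ ∀ k ≤ N, f L k = g k := by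
    intro N
    obtain ⟨L, hL1, hL2⟩ := Ultrafilter.nonempty_of_mem
      (Filter.inter_mem (hagree N) (hgt N))
    exact ⟨L, hL2, hL1⟩
  -- the limit sequence `g` is an infinite bad sequence: contradiction
  obtain ⟨k, M, hkM, hle, hh⟩ := PNSAux.infinite_good g
  obtain ⟨L, hL, ha⟩ := hpick M
  apply hbad L
  refine ⟨k, M, hkM, lt_trans hL (hn L), ?_, ?_⟩
  · rw [ha k (le_of_lt hkM), ha M le_rfl]
    exact hle
  · intro i hi1 hi2
    rw [ha k (le_of_lt hkM), ha i hi2]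
    exact hh i hi1 hi2
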